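/- Let p > 2 be a real number, let λ > 0, θ₁ > 0, K > 0, θ₂ ≥ 0, θ₃ ≥ 0, and set θ̃ = θ₁ − (θ₂ + θ₃)/λ; assume θ̃ > 0. Then there exist constants C ≥ 0 and C̃ ≥ 0, depending only on p, λ, θ₁, θ₂, θ₃, such that for every real ε with 0 < ε ≤ √((p−2) θ̃ λ/(p (p−1) K)) and all real numbers x, y, g ≥ 0 with √λ · x ≤ y, one has −p θ₁ x^{p−2} y² + p θ₂ x^p + p θ₃ x^{p−2} + p x^{p−2} g y + (p(p−1)/2) ε² K (x^{p−2} + x^p) ≤ −θ̃ λ x^p + C + C̃ g^p. -/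

import Mathlib

lemma aux_young (p : ℝ) (hp : 2 < p) (a b x z : ℝ) (ha : 0 ≤ a) (hb : 0 < b)
    (hx : 0 ≤ x) (hz : 0 ≤ z) :
    a * x ^ (p - 2) * z ^ (2 : ℕ) ≤ b * x ^ p + a * (a / b) ^ ((p - 2) / 2) * z ^ p := by
  have hp2 : (0:ℝ) < p - 2 := by linarith
  have hxp : x ^ p = x ^ (p - 2) * x ^ (2 : ℕ) := by
    rw [← Real.rpow_natCast x 2, ← Real.rpow_add' hx (by intro h; linarith)]
    norm_num
  have hzp : z ^ p = z ^ (p - 2) * z ^ (2 : ℕ) := by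
    rw [← Real.rpow_natCast z 2, ← Real.rpow_add' hz (by intro h; linarith)]
    norm_num
  have hC : 0 ≤ a * (a / b) ^ ((p - 2) / 2) * z ^ p := by
    apply mul_nonneg (mul_nonneg ha (Real.rpow_nonneg (by positivity) _)) (Real.rpow_nonneg hz _)
  rcases le_or_gt (a * z ^ (2:ℕ)) (b * x ^ (2:ℕ)) with h | h
  · have h1 : a * x ^ (p - 2) * z ^ (2:ℕ) ≤ b * x ^ p := by
      rw [hxp]
      have := mul_le_mul_of_nonneg_left h (Real.rpow_nonneg hx (p - 2))
      nlinarith [this]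
    linarith
  · have ha' : 0 < a := by
      by_contra hc
      push_neg at hc
      have ha0 : a = 0 := le_antisymm hc ha
      rw [ha0] at h
      nlinarith [mul_nonneg hb.le (sq_nonneg x)]
    have hab : 0 < a / b := by positivity
    have hxz : x ≤ Real.sqrt (a / b) * z := by
      by_contra hc
      push_neg at hc
      have ht : 0 ≤ Real.sqrt (a / b) * z := by positivity
      have h2 : (Real.sqrt (a/b) * z) ^ (2:ℕ) < x ^ (2:ℕ) :=
        pow_lt_pow_left₀ hc ht two_ne_zero
      have h3 : (Real.sqrt (a/b))^(2:ℕ) = a/b := Real.sq_sqrt hab.le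
      have h4 : a/b * z^(2:ℕ) < x^(2:ℕ) := by rw [mul_pow, h3] at h2; exact h2
      rw [div_mul_eq_mul_div, div_lt_iff₀ hb] at h4
      nlinarith
    have hmono : x ^ (p - 2) ≤ (Real.sqrt (a / b) * z) ^ (p - 2) :=
      Real.rpow_le_rpow hx hxz hp2.le
    have hsplit : (Real.sqrt (a / b) * z) ^ (p - 2)
        = (a / b) ^ ((p - 2) / 2) * z ^ (p - 2) := by
      rw [Real.mul_rpow (Real.sqrt_nonneg _) hz, Real.sqrt_eq_rpow,
        ← Real.rpow_mul hab.le]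
      ring_nf
    have h4 : a * x ^ (p - 2) * z ^ (2:ℕ)
        ≤ a * (a / b) ^ ((p - 2) / 2) * z ^ p := by
      rw [hzp]
      have := mul_le_mul_of_nonneg_left (hmono.trans_eq hsplit)
        (mul_nonneg ha (sq_nonneg z))
      nlinarith [this]
    have hbx : 0 ≤ b * x ^ p := mul_nonneg hb.le (Real.rpow_nonneg hx p)
    linarith

set_option maxHeartbeats 1000000 in
/-- Combined dissipativity estimate of the absorbing-set lemma for locally monotone
SPDEs in the critical case `γ = 2` with `θ̃ = θ₁ - (θ₂ + θ₃)/λ > 0`.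
Real powers are interpreted via `Real.rpow`. -/
theorem stmt_15 (p lam θ₁ θ₂ θ₃ : ℝ) (hp : 2 < p)
    (hlam : 0 < lam) (hθ₁ : 0 < θ₁) (hθ₂ : 0 ≤ θ₂) (hθ₃ : 0 ≤ θ₃)
    (hθ : 0 < θ₁ - (θ₂ + θ₃) / lam) :
    ∃ C C' : ℝ, 0 ≤ C ∧ 0 ≤ C' ∧
      ∀ K : ℝ, 0 < K → ∀ ε : ℝ, 0 < ε →
        ε ≤ Real.sqrt ((p - 2) * (θ₁ - (θ₂ + θ₃) / lam) * lam / (p * (p - 1) * K)) →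
        ∀ x y g : ℝ, 0 ≤ x → 0 ≤ y → 0 ≤ g → Real.sqrt lam * x ≤ y →
          -p * θ₁ * x ^ (p - 2) * y ^ (2 : ℕ) + p * θ₂ * x ^ p + p * θ₃ * x ^ (p - 2)
              + p * x ^ (p - 2) * g * y
              + (p * (p - 1) / 2) * ε ^ (2 : ℕ) * K * (x ^ (p - 2) + x ^ p)
            ≤ -(θ₁ - (θ₂ + θ₃) / lam) * lam * x ^ p + C + C' * g ^ p := by
  obtain ⟨θt, hθt⟩ : ∃ t : ℝ, t = θ₁ - (θ₂ + θ₃) / lam := ⟨_, rfl⟩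
  rw [← hθt] at hθ
  rw [← hθt]
  have hθtpos : 0 < θt := hθ
  have hp0 : 0 < p := by linarith
  have hp2 : (0:ℝ) < p - 2 := by linarith
  have hS2 : (0:ℝ) < p * θt * lam / 8 := by positivity
  have hA : (0:ℝ) ≤ p * θ₃ + (p - 2) / 2 * θt * lam := by positivity
  have hB : (0:ℝ) < p / θt := by positivity
  refine ⟨(p * θ₃ + (p - 2) / 2 * θt * lam) *
      ((p * θ₃ + (p - 2) / 2 * θt * lam) / (p * θt * lam / 8)) ^ ((p - 2) / 2),
    (p / θt) * ((p / θt) / (p * θt * lam / 8)) ^ ((p - 2) / 2),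
    mul_nonneg hA (Real.rpow_nonneg (by positivity) _),
    mul_nonneg hB.le (Real.rpow_nonneg (by positivity) _), ?_⟩
  intro K hK ε hε hεle x y g hx hy hg hxy
  have hX2 : 0 ≤ x ^ (p - 2) := Real.rpow_nonneg hx _
  have hXP : 0 ≤ x ^ p := Real.rpow_nonneg hx _
  have hxp : x ^ p = x ^ (p - 2) * x ^ (2 : ℕ) := by
    rw [← Real.rpow_natCast x 2, ← Real.rpow_add' hx (by intro h; linarith)]
    norm_num
  -- embedding: lam * x² ≤ y²
  have hyx : lam * x ^ (2:ℕ) ≤ y ^ (2:ℕ) := by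
    have h1 : Real.sqrt lam * x * (Real.sqrt lam * x) ≤ y * y :=
      mul_le_mul hxy hxy (by positivity) hy
    have h2 : Real.sqrt lam * Real.sqrt lam = lam := Real.mul_self_sqrt hlam.le
    nlinarith [h1, h2]
  -- noise smallness
  have hEbound : (p * (p - 1) / 2) * ε ^ (2:ℕ) * K ≤ (p - 2) / 2 * θt * lam := by
    have hden : 0 < p * (p - 1) * K := by
      have h1 : (0:ℝ) < p - 1 := by linarith
      positivity
    have hDq : 0 ≤ (p - 2) * θt * lam / (p * (p - 1) * K) :=
      div_nonneg (by positivity) hden.le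
    have hε2 : ε ^ (2:ℕ) ≤ (p - 2) * θt * lam / (p * (p - 1) * K) := by
      have h1 : ε ^ (2:ℕ) ≤ Real.sqrt ((p - 2) * θt * lam / (p * (p - 1) * K)) ^ (2:ℕ) :=
        pow_le_pow_left₀ hε.le hεle 2
      rwa [Real.sq_sqrt hDq] at h1
    have h2 := mul_le_mul_of_nonneg_left hε2
      (show (0:ℝ) ≤ p * (p-1) / 2 * K from mul_nonneg (by nlinarith) hK.le)
    calc (p * (p - 1) / 2) * ε ^ (2:ℕ) * K
        = p * (p-1) / 2 * K * ε ^ (2:ℕ) := by ring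
      _ ≤ p * (p-1) / 2 * K * ((p - 2) * θt * lam / (p * (p - 1) * K)) := h2
      _ = (p - 2) / 2 * θt * lam := by
          have h1 : p - 1 ≠ 0 := by linarith
          field_simp
  -- H3 : Itô correction bound
  have H3 : (p * (p - 1) / 2) * ε ^ (2:ℕ) * K * (x ^ (p - 2) + x ^ p)
      ≤ (p - 2) / 2 * θt * lam * (x ^ (p - 2) + x ^ p) :=
    mul_le_mul_of_nonneg_right hEbound (by positivity)
  -- H1 : Young on g*y
  have hgy : g * y ≤ θt / 4 * y ^ (2:ℕ) + 1 / θt * g ^ (2:ℕ) := by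
    have hkey : 4 * θt * (θt / 4 * y ^ (2:ℕ) + 1 / θt * g ^ (2:ℕ) - g * y)
        = (θt * y - 2 * g) ^ (2:ℕ) := by
      field_simp
      ring
    have h5 : 0 ≤ 4 * θt * (θt / 4 * y ^ (2:ℕ) + 1 / θt * g ^ (2:ℕ) - g * y) := by
      rw [hkey]; positivity
    nlinarith [h5, hθtpos]
  have H1 : p * x ^ (p - 2) * (g * y)
      ≤ p * x ^ (p - 2) * (θt / 4 * y ^ (2:ℕ) + 1 / θt * g ^ (2:ℕ)) :=
    mul_le_mul_of_nonneg_left hgy (by positivity)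
  -- H2 : embedding applied to the dissipative term
  have hθ₁δ : 0 ≤ θ₁ - θt / 4 := by
    have hle : θt ≤ θ₁ := by
      have h1 : 0 ≤ (θ₂ + θ₃) / lam := by positivity
      rw [hθt]; linarith
    linarith
  have H2 : p * (θ₁ - θt / 4) * lam * x ^ p
      ≤ p * (θ₁ - θt / 4) * x ^ (p - 2) * y ^ (2:ℕ) := by
    have h := mul_le_mul_of_nonneg_left hyx
      (show (0:ℝ) ≤ p * (θ₁ - θt / 4) * x ^ (p - 2) by positivity)
    calc p * (θ₁ - θt / 4) * lam * x ^ p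
        = p * (θ₁ - θt / 4) * x ^ (p - 2) * (lam * x ^ (2:ℕ)) := by rw [hxp]; ring
      _ ≤ _ := h
  -- H4, H5 : Young absorption of lower-order terms
  have H4 : (p * θ₃ + (p - 2) / 2 * θt * lam) * x ^ (p - 2)
      ≤ p * θt * lam / 8 * x ^ p + (p * θ₃ + (p - 2) / 2 * θt * lam) *
        ((p * θ₃ + (p - 2) / 2 * θt * lam) / (p * θt * lam / 8)) ^ ((p - 2) / 2) := by
    have h := aux_young p hp (p * θ₃ + (p - 2) / 2 * θt * lam) (p * θt * lam / 8) x 1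
      hA hS2 hx zero_le_one
    simpa using h
  have H5 : (p / θt) * x ^ (p - 2) * g ^ (2:ℕ)
      ≤ p * θt * lam / 8 * x ^ p + (p / θt) *
        ((p / θt) / (p * θt * lam / 8)) ^ ((p - 2) / 2) * g ^ p :=
    aux_young p hp (p / θt) (p * θt * lam / 8) x g hB.le hS2 hx hg
  -- coefficient bookkeeping
  have hid : p * (θt * lam) = p * (θ₁ * lam - θ₂ - θ₃) := by
    rw [hθt, sub_mul, div_mul_cancel₀ _ hlam.ne']; ring
  have hcoefscalar : p * θ₂ - p * (θ₁ - θt / 4) * lam + (p - 2) / 2 * θt * lam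
      + p * θt * lam / 8 + p * θt * lam / 8 ≤ -(θt * lam) := by
    nlinarith [hid, mul_nonneg hp0.le hθ₃]
  have Hco : (p * θ₂ - p * (θ₁ - θt / 4) * lam + (p - 2) / 2 * θt * lam
      + p * θt * lam / 8 + p * θt * lam / 8) * x ^ p ≤ -(θt * lam) * x ^ p :=
    mul_le_mul_of_nonneg_right hcoefscalar hXP
  ring_nf at H1 H2 H3 H4 H5 Hco ⊢
  linarith [H1, H2, H3, H4, H5, Hco]
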